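/- The state ρ = ½(|s₁⟩⟨s₁| + |s₂⟩⟨s₂|) with |s₁⟩ = (|00⟩_{AC}+|11⟩_{AC})⊗|00⟩_{BD}/√2 and |s₂⟩ = (|00⟩_{AC}−|11⟩_{AC})⊗|11⟩_{BD}/√2 satisfies ⟨X_A X_C⟩ = 0, ⟨Y_A Y_C Z_D⟩ = −1, and ⟨Z_A Z_C⟩ = 1, so that ⟨X_A X_C⟩² + ⟨Y_A Y_C Z_D⟩² + ⟨Z_A Z_C⟩² = 2 > 1; moreover the reduced state ρ_AC = ½(|00⟩⟨00| + |11⟩⟨11|) is separable. -/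

import Mathlib

open Matrix
open scoped Kronecker ComplexOrder
set_option maxHeartbeats 1600000

noncomputable def PauliX : Matrix (Fin 2) (Fin 2) ℂ := !![0, 1; 1, 0]
noncomputable def PauliY : Matrix (Fin 2) (Fin 2) ℂ := !![0, -Complex.I; Complex.I, 0]
noncomputable def PauliZ : Matrix (Fin 2) (Fin 2) ℂ := !![1, 0; 0, -1]
noncomputable abbrev Id2 : Matrix (Fin 2) (Fin 2) ℂ := 1

/-- Four-qubit index type, ordered as `A × B × C × D`. -/
abbrev Q4 := Fin 2 × Fin 2 × Fin 2 × Fin 2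

/-- `|s₁⟩ = (|00⟩_{AC}+|11⟩_{AC})/√2 ⊗ |00⟩_{BD}`. -/
noncomputable def s1 : Q4 → ℂ := fun x =>
  if x.1 = x.2.2.1 ∧ x.2.1 = 0 ∧ x.2.2.2 = 0 then ((1 / Real.sqrt 2 : ℝ) : ℂ) else 0

/-- `|s₂⟩ = (|00⟩_{AC}−|11⟩_{AC})/√2 ⊗ |11⟩_{BD}`. -/
noncomputable def s2 : Q4 → ℂ := fun x =>
  if x.1 = x.2.2.1 ∧ x.2.1 = 1 ∧ x.2.2.2 = 1 then
    (if x.1 = 0 then (1 : ℂ) else -1) * ((1 / Real.sqrt 2 : ℝ) : ℂ) else 0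

/-- `ρ = ½(|s₁⟩⟨s₁| + |s₂⟩⟨s₂|)`. -/
noncomputable def ρlink : Matrix Q4 Q4 ℂ :=
  (1 / 2 : ℂ) • (vecMulVec s1 (star s1) + vecMulVec s2 (star s2))

/-- Expectation value `Tr(ρ O)` (real part). -/
noncomputable def linkExp (O : Matrix Q4 Q4 ℂ) : ℝ := ((ρlink * O).trace).re

/-- Reduced state of `ρ` on `AC`. -/
noncomputable def ρAC : Matrix (Fin 2 × Fin 2) (Fin 2 × Fin 2) ℂ :=
  fun x y => ∑ b : Fin 2, ∑ d : Fin 2, ρlink (x.1, b, x.2, d) (y.1, b, y.2, d)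

lemma sqrt_half_mul : ((1 / Real.sqrt 2 : ℝ) : ℂ) * ((1 / Real.sqrt 2 : ℝ) : ℂ) = 1 / 2 := by
  have h2 : ((Real.sqrt 2 : ℝ) : ℂ) * ((Real.sqrt 2 : ℝ) : ℂ) = 2 := by
    norm_cast
    rw [Real.mul_self_sqrt] <;> norm_num
  push_cast
  rw [div_mul_div_comm, h2]
  norm_num

lemma rhoAC_eq :
    ρAC = (fun x y => if x = y ∧ x.1 = x.2 then (1 / 2 : ℂ) else 0) := by
  have hsq : ((Real.sqrt 2 : ℝ) : ℂ) ^ 2 = 2 := by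
    norm_cast
    rw [Real.sq_sqrt] <;> norm_num
  funext x y
  obtain ⟨a, c⟩ := x
  obtain ⟨a', c'⟩ := y
  fin_cases a <;> fin_cases c <;> fin_cases a' <;> fin_cases c' <;>
    simp [ρAC, ρlink, s1, s2, vecMulVec_apply, Fin.sum_univ_two, Prod.ext_iff,
      sqrt_half_mul] <;> ring_nf <;> norm_num [hsq]

/-- The state `ρ = ½(|s₁⟩⟨s₁| + |s₂⟩⟨s₂|)` satisfies `⟨X_A X_C⟩ = 0`,
`⟨Y_A Y_C Z_D⟩ = −1`, `⟨Z_A Z_C⟩ = 1`, hence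
`⟨X_A X_C⟩² + ⟨Y_A Y_C Z_D⟩² + ⟨Z_A Z_C⟩² = 2 > 1`, although the reduced state
`ρ_AC = ½(|00⟩⟨00| + |11⟩⟨11|)` is separable. -/
theorem link_certification_example :
    linkExp (PauliX ⊗ₖ (Id2 ⊗ₖ (PauliX ⊗ₖ Id2))) = 0 ∧
    linkExp (PauliY ⊗ₖ (Id2 ⊗ₖ (PauliY ⊗ₖ PauliZ))) = -1 ∧
    linkExp (PauliZ ⊗ₖ (Id2 ⊗ₖ (PauliZ ⊗ₖ Id2))) = 1 ∧
    linkExp (PauliX ⊗ₖ (Id2 ⊗ₖ (PauliX ⊗ₖ Id2))) ^ 2 +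
      linkExp (PauliY ⊗ₖ (Id2 ⊗ₖ (PauliY ⊗ₖ PauliZ))) ^ 2 +
      linkExp (PauliZ ⊗ₖ (Id2 ⊗ₖ (PauliZ ⊗ₖ Id2))) ^ 2 = 2 ∧
    (2 : ℝ) > 1 ∧
    ρAC = (fun x y => if x = y ∧ x.1 = x.2 then (1 / 2 : ℂ) else 0) ∧
    ∃ (K : ℕ) (w : Fin K → ℝ)
      (α γ : Fin K → Matrix (Fin 2) (Fin 2) ℂ),
      (∀ k, 0 ≤ w k) ∧ ∑ k, w k = 1 ∧
      (∀ k, (α k).PosSemidef ∧ (α k).trace = 1) ∧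
      (∀ k, (γ k).PosSemidef ∧ (γ k).trace = 1) ∧
      ρAC = ∑ k, (w k : ℂ) • (α k ⊗ₖ γ k) := by
  have h2 : Real.sqrt 2 * Real.sqrt 2 = 2 := Real.mul_self_sqrt (by norm_num)
  have hx : linkExp (PauliX ⊗ₖ (Id2 ⊗ₖ (PauliX ⊗ₖ Id2))) = 0 := by
    simp [linkExp, ρlink, s1, s2, Matrix.trace, Matrix.mul_apply, Fintype.sum_prod_type,
      Fin.sum_univ_two, vecMulVec_apply, kroneckerMap_apply, PauliX, Matrix.one_apply,
      Fin.ext_iff, -Fin.val_eq_zero_iff]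
  have hy : linkExp (PauliY ⊗ₖ (Id2 ⊗ₖ (PauliY ⊗ₖ PauliZ))) = -1 := by
    simp [linkExp, ρlink, s1, s2, Matrix.trace, Matrix.mul_apply, Fintype.sum_prod_type,
      Fin.sum_univ_two, vecMulVec_apply, kroneckerMap_apply, PauliY, PauliZ,
      Matrix.one_apply, Fin.ext_iff, -Fin.val_eq_zero_iff]
    norm_num [Complex.ext_iff, h2]
    ring_nf
    norm_num [h2]
  have hz : linkExp (PauliZ ⊗ₖ (Id2 ⊗ₖ (PauliZ ⊗ₖ Id2))) = 1 := by
    simp [linkExp, ρlink, s1, s2, Matrix.trace, Matrix.mul_apply, Fintype.sum_prod_type,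
      Fin.sum_univ_two, vecMulVec_apply, kroneckerMap_apply, PauliZ, Matrix.one_apply,
      Fin.ext_iff, -Fin.val_eq_zero_iff]
    norm_num [Complex.ext_iff, h2]
    ring_nf
    norm_num [h2]
  refine ⟨hx, hy, hz, by rw [hx, hy, hz]; norm_num, by norm_num, rhoAC_eq, ?_⟩
  refine ⟨2, ![1/2, 1/2], ![Matrix.diagonal ![1,0], Matrix.diagonal ![0,1]],
    ![Matrix.diagonal ![1,0], Matrix.diagonal ![0,1]], ?_, ?_, ?_, ?_, ?_⟩
  · intro k; fin_cases k <;> norm_num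
  · norm_num [Fin.sum_univ_two]
  · intro k; fin_cases k <;>
      exact ⟨Matrix.posSemidef_diagonal_iff.2 (fun i => by fin_cases i <;> norm_num),
        by simp [Matrix.trace, Fin.sum_univ_two]⟩
  · intro k; fin_cases k <;>
      exact ⟨Matrix.posSemidef_diagonal_iff.2 (fun i => by fin_cases i <;> norm_num),
        by simp [Matrix.trace, Fin.sum_univ_two]⟩
  · rw [rhoAC_eq]
    funext x y
    obtain ⟨a, c⟩ := x
    obtain ⟨a', c'⟩ := y
    fin_cases a <;> fin_cases c <;> fin_cases a' <;> fin_cases c' <;>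
      simp [Fin.sum_univ_two, kroneckerMap_apply, Matrix.diagonal, Prod.ext_iff] <;> norm_num
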